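/- Assume the equation F u = y has a solution u⁰ ∈ U with R(u⁰) < ∞. Let α : (0,∞) → (0,∞) satisfy α(δ) → 0 and δ²/α(δ) → 0 as δ → 0. Let (δ_k) be a sequence of positive numbers converging to 0, let (y_k) in V satisfy ‖y − y_k‖ ≤ δ_k, and let u_k be a minimizer of T_{α(δ_k), y_k} for each k. Then (u_k) has a weakly convergent subsequence, and every weak limit point u of (u_k) satisfies F u = y. -/

import Mathlib

open Filter Topology ENNReal

/-- Weak convergence of a sequence in a real inner ℝ product space. -/
def WeakConv {U : Type*} [NormedAddCommGroup U] [InnerProductSpace ℝ U]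
    (u : ℕ → U) (x : U) : Prop :=
  ∀ w : U, Tendsto (fun k => (inner ℝ w (u k) : ℝ)) atTop (nhds (inner ℝ w x : ℝ))

/-- The Tikhonov functional `T_{α,y}(u) = (1/2)‖F u − y‖² + α R(u)`. -/
noncomputable def Tik {U V : Type*} [NormedAddCommGroup U] [InnerProductSpace ℝ U]
    [NormedAddCommGroup V] [InnerProductSpace ℝ V]
    (F : U →L[ℝ] V) (R : U → ℝ≥0∞) (α : ℝ) (y : V) (u : U) : ℝ≥0∞ :=
  ENNReal.ofReal (2⁻¹ * ‖F u - y‖ ^ 2) + ENNReal.ofReal α * R u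

lemma exists_weak_subseq {U : Type*} [NormedAddCommGroup U] [InnerProductSpace ℝ U]
    [CompleteSpace U] (u : ℕ → U) (B : ℝ) (hB : ∀ k, ‖u k‖ ≤ B) :
    ∃ φ : ℕ → ℕ, StrictMono φ ∧ ∃ x : U, WeakConv (u ∘ φ) x := by
  have hB0 : 0 ≤ B := le_trans (norm_nonneg _) (hB 0)
  set g : ℕ → (ℕ → ℝ) := fun k n => inner ℝ (u n) (u k) with hg
  have hgmem : ∀ k, g k ∈ Set.pi Set.univ fun n => Set.Icc (-(‖u n‖ * B)) (‖u n‖ * B) := by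
    intro k n _
    have h1 : |(inner ℝ (u n) (u k) : ℝ)| ≤ ‖u n‖ * ‖u k‖ := abs_real_inner_le_norm _ _
    have h2 : ‖u n‖ * ‖u k‖ ≤ ‖u n‖ * B :=
      mul_le_mul_of_nonneg_left (hB k) (norm_nonneg _)
    exact Set.mem_Icc.mpr (abs_le.mp (h1.trans h2))
  obtain ⟨a, -, φ, hφ, hconv⟩ :=
    (isCompact_univ_pi fun n => isCompact_Icc).tendsto_subseq hgmem
  have hcoord : ∀ n, Tendsto (fun k => (inner ℝ (u n) (u (φ k)) : ℝ)) atTop (𝓝 (a n)) :=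
    fun n => tendsto_pi_nhds.mp hconv n
  set M := (Submodule.span ℝ (Set.range u)).topologicalClosure with hM
  have hu_mem : ∀ k, u k ∈ M := fun k =>
    Submodule.le_topologicalClosure _ (Submodule.subset_span ⟨k, rfl⟩)
  let W : Submodule ℝ U :=
    { carrier := {w : U | ∃ L : ℝ, Tendsto (fun k => (inner ℝ w (u (φ k)) : ℝ)) atTop (𝓝 L)}
      add_mem' := by
        rintro w v ⟨Lw, hw⟩ ⟨Lv, hv⟩
        exact ⟨Lw + Lv, by simpa [inner_add_left] using hw.add hv⟩
      zero_mem' := ⟨0, by simpa using (tendsto_const_nhds : Tendsto (fun _ : ℕ => (0:ℝ)) atTop _)⟩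
      smul_mem' := by
        rintro c w ⟨L, hw⟩
        exact ⟨c * L, by simpa [real_inner_smul_left] using hw.const_mul c⟩ }
  have hWclosed : IsClosed (W : Set U) := by
    refine IsSeqClosed.isClosed ?_
    intro x w hxW hxw
    have hC : CauchySeq (fun k => (inner ℝ w (u (φ k)) : ℝ)) := by
      rw [Metric.cauchySeq_iff']
      intro ε hε
      obtain ⟨j, hj⟩ := Metric.tendsto_atTop.mp hxw (ε / (4 * (B + 1))) (by positivity)
      obtain ⟨L, hL⟩ := hxW j
      obtain ⟨N, hN⟩ := Metric.tendsto_atTop.mp hL (ε / 4) (by positivity)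
      refine ⟨N, fun k hk => ?_⟩
      have key : ∀ m, dist (inner ℝ w (u (φ m)) : ℝ) (inner ℝ (x j) (u (φ m)) : ℝ) ≤ ε / 4 := by
        intro m
        rw [Real.dist_eq]
        have he : (inner ℝ w (u (φ m)) : ℝ) - inner ℝ (x j) (u (φ m)) = inner ℝ (w - x j) (u (φ m)) := by
          rw [inner_sub_left]
        rw [he]
        have h1 : |(inner ℝ (w - x j) (u (φ m)) : ℝ)| ≤ ‖w - x j‖ * ‖u (φ m)‖ :=
          abs_real_inner_le_norm _ _
        have h2 : ‖w - x j‖ < ε / (4 * (B + 1)) := by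
          have := hj j le_rfl; rwa [dist_eq_norm, norm_sub_rev] at this
        have h3 : ‖w - x j‖ * ‖u (φ m)‖ ≤ ‖w - x j‖ * (B + 1) :=
          mul_le_mul_of_nonneg_left ((hB _).trans (by linarith)) (norm_nonneg _)
        have h4 : ‖w - x j‖ * (B + 1) ≤ (ε / (4 * (B + 1))) * (B + 1) :=
          mul_le_mul_of_nonneg_right h2.le (by linarith)
        have h5 : (ε / (4 * (B + 1))) * (B + 1) = ε / 4 := by
          field_simp
        linarith
      have d2 : dist (inner ℝ (x j) (u (φ k)) : ℝ) (inner ℝ (x j) (u (φ N)) : ℝ) < ε / 2 := by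
        calc dist (inner ℝ (x j) (u (φ k)) : ℝ) (inner ℝ (x j) (u (φ N)) : ℝ)
            ≤ dist (inner ℝ (x j) (u (φ k)) : ℝ) L + dist (inner ℝ (x j) (u (φ N)) : ℝ) L :=
              dist_triangle_right _ _ _
          _ < ε / 4 + ε / 4 := add_lt_add (hN k hk) (hN N le_rfl)
          _ = ε / 2 := by ring
      calc dist (inner ℝ w (u (φ k)) : ℝ) (inner ℝ w (u (φ N)) : ℝ)
          ≤ dist (inner ℝ w (u (φ k)) : ℝ) (inner ℝ (x j) (u (φ k)) : ℝ)
            + dist (inner ℝ (x j) (u (φ k)) : ℝ) (inner ℝ (x j) (u (φ N)) : ℝ)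
            + dist (inner ℝ (x j) (u (φ N)) : ℝ) (inner ℝ w (u (φ N)) : ℝ) := dist_triangle4 _ _ _ _
        _ < ε := by
            have := key k
            have h2 := key N
            rw [dist_comm] at h2
            linarith
    exact cauchySeq_tendsto_of_complete hC
  have hMW : M ≤ W := by
    apply Submodule.topologicalClosure_minimal
    · rw [Submodule.span_le]
      rintro _ ⟨n, rfl⟩
      exact ⟨a n, hcoord n⟩
    · exact hWclosed
  have hMoW : Mᗮ ≤ W := by
    intro w hw
    refine ⟨0, ?_⟩
    have hz : ∀ k, (inner ℝ w (u (φ k)) : ℝ) = 0 := by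
      intro k
      rw [real_inner_comm]
      exact (Submodule.mem_orthogonal M w).mp hw (u (φ k)) (hu_mem (φ k))
    simpa [hz] using (tendsto_const_nhds : Tendsto (fun _ : ℕ => (0:ℝ)) atTop _)
  have hWall : ∀ w : U, ∃ L, Tendsto (fun k => (inner ℝ w (u (φ k)) : ℝ)) atTop (𝓝 L) := by
    intro w
    haveI : CompleteSpace M := (Submodule.isClosed_topologicalClosure _).completeSpace_coe
    have hWtop : (⊤ : Submodule ℝ U) ≤ W := by
      rw [← Submodule.sup_orthogonal_of_hasOrthogonalProjection (K := M)]
      exact sup_le hMW hMoW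
    exact hWtop Submodule.mem_top
  choose f hf using hWall
  have hf_add : ∀ w v, f (w + v) = f w + f v := fun w v =>
    tendsto_nhds_unique (hf (w + v)) (by simpa [inner_add_left] using (hf w).add (hf v))
  have hf_smul : ∀ (c : ℝ) (w : U), f (c • w) = c * f w := fun c w =>
    tendsto_nhds_unique (hf (c • w)) (by simpa [real_inner_smul_left] using (hf w).const_mul c)
  have hf_bd : ∀ w, ‖f w‖ ≤ B * ‖w‖ := by
    intro w
    have h1 : Tendsto (fun k => |(inner ℝ w (u (φ k)) : ℝ)|) atTop (𝓝 |f w|) := (hf w).abs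
    have h2 : ∀ k, |(inner ℝ w (u (φ k)) : ℝ)| ≤ B * ‖w‖ := by
      intro k
      calc |(inner ℝ w (u (φ k)) : ℝ)| ≤ ‖w‖ * ‖u (φ k)‖ := abs_real_inner_le_norm _ _
        _ ≤ B * ‖w‖ := by nlinarith [hB (φ k), norm_nonneg w]
    rw [Real.norm_eq_abs]
    exact le_of_tendsto h1 (Eventually.of_forall h2)
  let f' : U →L[ℝ] ℝ := LinearMap.mkContinuous
    { toFun := f, map_add' := hf_add, map_smul' := hf_smul } B hf_bd
  refine ⟨φ, hφ, (InnerProductSpace.toDual ℝ U).symm f', ?_⟩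
  intro w
  have hx : (inner ℝ w ((InnerProductSpace.toDual ℝ U).symm f') : ℝ) = f w := by
    rw [real_inner_comm]; exact InnerProductSpace.toDual_symm_apply
  rw [hx]
  exact hf w

/-- If `F u = y` has a solution with finite `R`, the parameter choice
`α(δ)` satisfies `α(δ) → 0` and `δ²/α(δ) → 0` as `δ → 0`, `(δ_k)` are positive noise
levels tending to `0`, `‖y − y_k‖ ≤ δ_k`, and `u_k` minimizes `T_{α(δ_k),y_k}`, then
`(u_k)` has a weakly convergent subsequence and every weak limit point `u` of `(u_k)`
satisfies `F u = y`. -/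
theorem tikhonov_convergence
    {U V : Type*} [NormedAddCommGroup U] [InnerProductSpace ℝ U] [CompleteSpace U]
    [NormedAddCommGroup V] [InnerProductSpace ℝ V] [CompleteSpace V]
    (F : U →L[ℝ] V) (R : U → ℝ≥0∞)
    (hproper : ∃ u : U, R u ≠ ⊤)
    (hconvex : ∀ u v : U, ∀ t : ℝ, 0 ≤ t → t ≤ 1 →
      R (t • u + (1 - t) • v) ≤ ENNReal.ofReal t * R u + ENNReal.ofReal (1 - t) * R v)
    (hlsc : ∀ (u : ℕ → U) (x : U), WeakConv u x →
      R x ≤ atTop.liminf (fun k => R (u k)))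
    (hbdd : ∀ α : ℝ, 0 < α → ∀ y : V, ∀ C : ℝ, 0 < C →
      Bornology.IsBounded {u : U | Tik F R α y u ≤ ENNReal.ofReal C})
    (y : V) (u0 : U) (hsol : F u0 = y) (hfin : R u0 ≠ ⊤)
    (α : ℝ → ℝ) (hαpos : ∀ δ : ℝ, 0 < δ → 0 < α δ)
    (hα0 : Tendsto α (nhdsWithin 0 (Set.Ioi 0)) (nhds 0))
    (hδ2α : Tendsto (fun δ : ℝ => δ ^ 2 / α δ) (nhdsWithin 0 (Set.Ioi 0)) (nhds 0))
    (δSeq : ℕ → ℝ) (hδpos : ∀ k, 0 < δSeq k) (hδ0 : Tendsto δSeq atTop (nhds 0))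
    (ySeq : ℕ → V) (hy : ∀ k, ‖y - ySeq k‖ ≤ δSeq k)
    (u : ℕ → U)
    (hmin : ∀ k : ℕ, ∀ w : U,
      Tik F R (α (δSeq k)) (ySeq k) (u k) ≤ Tik F R (α (δSeq k)) (ySeq k) w) :
    (∃ φ : ℕ → ℕ, StrictMono φ ∧ ∃ x : U, WeakConv (u ∘ φ) x) ∧
    (∀ x : U, (∃ φ : ℕ → ℕ, StrictMono φ ∧ WeakConv (u ∘ φ) x) → F x = y) := by
  set r0 : ℝ := (R u0).toReal with hr0
  have hr0nn : 0 ≤ r0 := ENNReal.toReal_nonneg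
  have hRu0 : R u0 = ENNReal.ofReal r0 := (ENNReal.ofReal_toReal hfin).symm
  have hαk : ∀ k, 0 < α (δSeq k) := fun k => hαpos _ (hδpos k)
  have h1 : ∀ k, Tik F R (α (δSeq k)) (ySeq k) (u k)
      ≤ ENNReal.ofReal (2⁻¹ * δSeq k ^ 2 + α (δSeq k) * r0) := by
    intro k
    refine (hmin k u0).trans ?_
    unfold Tik
    rw [hsol, hRu0, ← ENNReal.ofReal_mul (hαk k).le,
      ← ENNReal.ofReal_add (by positivity) (mul_nonneg (hαk k).le hr0nn)]
    apply ENNReal.ofReal_le_ofReal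
    have h2 := hy k
    have h3 : ‖y - ySeq k‖ ^ 2 ≤ δSeq k ^ 2 := by nlinarith [norm_nonneg (y - ySeq k)]
    linarith
  have ha : ∀ k, ‖F (u k) - ySeq k‖ ^ 2 ≤ δSeq k ^ 2 + 2 * α (δSeq k) * r0 := by
    intro k
    have h2 : ENNReal.ofReal (2⁻¹ * ‖F (u k) - ySeq k‖ ^ 2)
        ≤ ENNReal.ofReal (2⁻¹ * δSeq k ^ 2 + α (δSeq k) * r0) :=
      le_trans le_self_add (h1 k)
    rw [ENNReal.ofReal_le_ofReal_iff
      (add_nonneg (by positivity) (mul_nonneg (hαk k).le hr0nn))] at h2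
    linarith
  have hb : ∀ k, R (u k) ≤ ENNReal.ofReal (2⁻¹ * (δSeq k ^ 2 / α (δSeq k)) + r0) := by
    intro k
    have hα := hαk k
    have heq : ENNReal.ofReal (2⁻¹ * δSeq k ^ 2 + α (δSeq k) * r0)
        = ENNReal.ofReal (α (δSeq k)) * ENNReal.ofReal (2⁻¹ * (δSeq k ^ 2 / α (δSeq k)) + r0) := by
      rw [← ENNReal.ofReal_mul hα.le]
      congr 1
      field_simp
    have h2 : ENNReal.ofReal (α (δSeq k)) * R (u k)
        ≤ ENNReal.ofReal (α (δSeq k)) * ENNReal.ofReal (2⁻¹ * (δSeq k ^ 2 / α (δSeq k)) + r0) := by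
      rw [← heq]
      exact le_trans le_add_self (h1 k)
    exact (ENNReal.mul_le_mul_iff_right (ENNReal.ofReal_pos.mpr hα).ne' ENNReal.ofReal_ne_top).mp h2
  have hδin : Tendsto δSeq atTop (nhdsWithin 0 (Set.Ioi 0)) :=
    tendsto_nhdsWithin_of_tendsto_nhds_of_eventually_within _ hδ0 (Eventually.of_forall hδpos)
  have hαk0 : Tendsto (fun k => α (δSeq k)) atTop (nhds 0) := hα0.comp hδin
  have hd2a : Tendsto (fun k => δSeq k ^ 2 / α (δSeq k)) atTop (nhds 0) := hδ2α.comp hδin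
  have hFy : Tendsto (fun k => F (u k)) atTop (𝓝 y) := by
    rw [tendsto_iff_norm_sub_tendsto_zero]
    have hub : ∀ k, ‖F (u k) - y‖ ≤ Real.sqrt (δSeq k ^ 2 + 2 * α (δSeq k) * r0) + δSeq k := by
      intro k
      have h2 : ‖F (u k) - ySeq k‖ ≤ Real.sqrt (δSeq k ^ 2 + 2 * α (δSeq k) * r0) := by
        have h3 := Real.sqrt_le_sqrt (ha k)
        rwa [Real.sqrt_sq (norm_nonneg _)] at h3
      have h4 : ‖F (u k) - y‖ ≤ ‖F (u k) - ySeq k‖ + ‖ySeq k - y‖ := by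
        have := dist_triangle (F (u k)) (ySeq k) y
        simpa [dist_eq_norm] using this
      have h5 : ‖ySeq k - y‖ ≤ δSeq k := by rw [norm_sub_rev]; exact hy k
      linarith
    have t1 : Tendsto (fun k => δSeq k ^ 2 + 2 * α (δSeq k) * r0) atTop (𝓝 0) := by
      have := ((hδ0.pow 2).add ((hαk0.const_mul 2).mul_const r0))
      simpa using this
    have t2 : Tendsto (fun k => Real.sqrt (δSeq k ^ 2 + 2 * α (δSeq k) * r0) + δSeq k)
        atTop (𝓝 0) := by
      have hs : Tendsto (fun k => Real.sqrt (δSeq k ^ 2 + 2 * α (δSeq k) * r0)) atTop (𝓝 0) := by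
        have := (Real.continuous_sqrt.tendsto 0).comp t1
        simpa [Function.comp_def] using this
      simpa using hs.add hδ0
    exact squeeze_zero (fun k => norm_nonneg _) hub t2
  -- boundedness
  have hnorm0 : Tendsto (fun k => ‖F (u k) - y‖) atTop (𝓝 0) :=
    tendsto_iff_norm_sub_tendsto_zero.mp hFy
  have ev1 : ∀ᶠ k in atTop, ‖F (u k) - y‖ ≤ 1 := hnorm0.eventually_le_const one_pos
  have ev2 : ∀ᶠ k in atTop, δSeq k ^ 2 / α (δSeq k) ≤ 1 := hd2a.eventually_le_const one_pos
  have evS : ∀ᶠ k in atTop, u k ∈ {v : U | Tik F R 1 y v ≤ ENNReal.ofReal (r0 + 1)} := by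
    filter_upwards [ev1, ev2] with k h1' h2'
    show Tik F R 1 y (u k) ≤ _
    unfold Tik
    have hb' : R (u k) ≤ ENNReal.ofReal (2⁻¹ + r0) := by
      refine (hb k).trans (ENNReal.ofReal_le_ofReal ?_)
      have hq : 0 ≤ δSeq k ^ 2 / α (δSeq k) := div_nonneg (by positivity) (hαk k).le
      nlinarith
    calc ENNReal.ofReal (2⁻¹ * ‖F (u k) - y‖ ^ 2) + ENNReal.ofReal (1 : ℝ) * R (u k)
        ≤ ENNReal.ofReal 2⁻¹ + ENNReal.ofReal (2⁻¹ + r0) := by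
          refine add_le_add (ENNReal.ofReal_le_ofReal ?_) ?_
          · nlinarith [norm_nonneg (F (u k) - y)]
          · simpa using hb'
      _ = ENNReal.ofReal (r0 + 1) := by
          rw [← ENNReal.ofReal_add (by norm_num) (by linarith)]
          congr 1
          ring
  obtain ⟨N, hN⟩ := eventually_atTop.mp evS
  have hSbdd := hbdd 1 one_pos y (r0 + 1) (by linarith)
  have hbig : Bornology.IsBounded (Set.range u) := by
    have hsub : Set.range u ⊆
        (u '' Set.Iio N) ∪ {v : U | Tik F R 1 y v ≤ ENNReal.ofReal (r0 + 1)} := by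
      rintro _ ⟨k, rfl⟩
      rcases lt_or_ge k N with h | h
      · exact Or.inl ⟨k, h, rfl⟩
      · exact Or.inr (hN k h)
    exact ((((Set.finite_Iio N).image u).isBounded).union hSbdd).subset hsub
  obtain ⟨B, hBub⟩ := hbig.exists_norm_le
  have hBall : ∀ k, ‖u k‖ ≤ B := fun k => hBub _ ⟨k, rfl⟩
  constructor
  · exact exists_weak_subseq u B hBall
  · rintro x ⟨φ, hφ, hwc⟩
    refine ext_inner_left ℝ fun w => ?_
    have t1 : Tendsto (fun k => (inner ℝ w (F (u (φ k))) : ℝ)) atTop (𝓝 (inner ℝ w (F x) : ℝ)) := by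
      simpa only [ContinuousLinearMap.adjoint_inner_left, Function.comp] using
        hwc ((ContinuousLinearMap.adjoint F) w)
    have t2 : Tendsto (fun k => (inner ℝ w (F (u (φ k))) : ℝ)) atTop (𝓝 (inner ℝ w y : ℝ)) :=
      Tendsto.inner tendsto_const_nhds (hFy.comp hφ.tendsto_atTop)
    exact tendsto_nhds_unique t1 t2
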